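/- Let n, d be positive integers with n > d and let A be an n × n matrix with entries in {0,1} such that every row of A has exactly d ones and every column of A has exactly d ones. Let Γ_A be the simple graph on the column indices of A in which two distinct columns j, k are adjacent if and only if the number of rows i with A_{i,j} = A_{i,k} = 1 equals d − 1. Assume Γ_A is connected. Then for every set S of column indices with 0 < |S| ≤ d such that the subgraph of Γ_A induced by S is connected, the number of rows i with A_{i,j} = 1 for all j ∈ S equals d − |S| + 1. -/

import Mathlib

open Finset

/-- The graph `Γ_A` on the column indices of a 0/1-matrix `A` (encoded with `Bool` entries):
two distinct columns `j, k` are adjacent iff the number of rows `i` with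
`A i j = A i k = 1` equals `d - 1`. -/
def gammaA (n d : ℕ) (A : Fin n → Fin n → Bool) : SimpleGraph (Fin n) where
  Adj j k := j ≠ k ∧ (univ.filter (fun i => A i j ∧ A i k)).card = d - 1
  symm := ⟨by
    rintro j k ⟨hjk, hcard⟩
    refine ⟨hjk.symm, ?_⟩
    rw [← hcard]
    congr 1
    ext i
    simp [and_comm]⟩
  loopless := ⟨fun j h => h.1 rfl⟩

/-- Walking from inside `Q` to outside `Q` one crosses an edge exiting `Q`. -/
lemma exit_walk {V : Type*} {G : SimpleGraph V} {Q : V → Prop} :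
    ∀ {a b : V}, G.Walk a b → Q a → ¬ Q b →
      ∃ j k, Q j ∧ ¬ Q k ∧ G.Adj j k := by
  intro a b w
  induction w with
  | nil => intro h h'; exact absurd h h'
  | @cons u v c h p ih =>
    intro ha hb
    by_cases hq : Q v
    · exact ih hq hb
    · exact ⟨u, v, ha, hq, h⟩

/-- Adding a column adjacent (in `Γ_A`) to a column of `P` decreases the number of
common one-rows by at most `1`. -/
lemma stepA (n d : ℕ) (A : Fin n → Fin n → Bool)
    (hcol : ∀ j : Fin n, (univ.filter (fun i => A i j)).card = d)
    (P : Finset (Fin n)) (j0 k : Fin n) (hj0 : j0 ∈ P)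
    (hadj : (gammaA n d A).Adj j0 k) :
    (univ.filter (fun i => ∀ j ∈ P, A i j)).card ≤
      (univ.filter (fun i => ∀ j ∈ insert k P, A i j)).card + 1 := by
  classical
  have h1 : (univ.filter (fun i => A i j0 ∧ A i k)).card = d - 1 := hadj.2
  have h2 : (univ.filter (fun i => A i j0 ∧ A i k)).card
      + (univ.filter (fun i => A i j0 ∧ ¬ (A i k : Prop))).card = d := by
    have := Finset.card_filter_add_card_filter_not
      (s := univ.filter (fun i : Fin n => A i j0)) (p := fun i => (A i k : Prop))
    rw [Finset.filter_filter, Finset.filter_filter] at this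
    rw [this, hcol j0]
  have hD : (univ.filter (fun i => A i j0 ∧ ¬ (A i k : Prop))).card ≤ 1 := by omega
  have hsub : (univ.filter (fun i => ∀ j ∈ P, A i j)) ⊆
      (univ.filter (fun i => ∀ j ∈ insert k P, A i j)) ∪
      (univ.filter (fun i => A i j0 ∧ ¬ (A i k : Prop))) := by
    intro i hi
    simp only [Finset.mem_filter, Finset.mem_univ, true_and] at hi
    by_cases hk : (A i k : Prop)
    · apply Finset.mem_union_left
      simp only [Finset.mem_filter, Finset.mem_univ, true_and, Finset.mem_insert]
      rintro j (rfl | hj)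
      · exact hk
      · exact hi j hj
    · apply Finset.mem_union_right
      simp only [Finset.mem_filter, Finset.mem_univ, true_and]
      exact ⟨hi j0 hj0, hk⟩
  calc (univ.filter (fun i => ∀ j ∈ P, A i j)).card
      ≤ _ := Finset.card_le_card hsub
    _ ≤ (univ.filter (fun i => ∀ j ∈ insert k P, A i j)).card
        + (univ.filter (fun i => A i j0 ∧ ¬ (A i k : Prop))).card :=
        Finset.card_union_le _ _
    _ ≤ _ := by omega

/-- Growing `P` up to a connected `S` inside `S`, the count drops by at most `1` per step. -/
lemma grow_in (n d : ℕ) (A : Fin n → Fin n → Bool)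
    (hcol : ∀ j : Fin n, (univ.filter (fun i => A i j)).card = d)
    (S : Finset (Fin n))
    (hSconn : ((gammaA n d A).induce (S : Set (Fin n))).Connected) :
    ∀ m (P : Finset (Fin n)), P ⊆ S → P.Nonempty → S.card = P.card + m →
      (univ.filter (fun i => ∀ j ∈ P, A i j)).card ≤
        (univ.filter (fun i => ∀ j ∈ S, A i j)).card + m := by
  intro m
  induction m with
  | zero =>
    intro P hPS _ hcard
    have : P = S := Finset.eq_of_subset_of_card_le hPS (by omega)
    subst this; simp
  | succ m ih =>
    intro P hPS hPne hcard
    have hne : P ≠ S := by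
      intro h; subst h; omega
    obtain ⟨k', hk'S, hk'P⟩ := Finset.exists_of_ssubset (lt_of_le_of_ne hPS hne)
    obtain ⟨r, hr⟩ := hPne
    have hreach := hSconn.preconnected ⟨r, Finset.mem_coe.mpr (hPS hr)⟩
      ⟨k', Finset.mem_coe.mpr hk'S⟩
    obtain ⟨w⟩ := hreach
    obtain ⟨j, k, hjP, hkP, hadj⟩ :=
      exit_walk (Q := fun v : (S : Set (Fin n)) => (v : Fin n) ∈ P) w hr hk'P
    have hadj' : (gammaA n d A).Adj (j : Fin n) (k : Fin n) := hadj
    have hkS : (k : Fin n) ∈ S := Finset.mem_coe.mp k.2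
    have hstep := stepA n d A hcol P (j : Fin n) (k : Fin n) hjP hadj'
    have hins : S.card = (insert (k : Fin n) P).card + m := by
      rw [Finset.card_insert_of_notMem hkP]; omega
    have hih := ih (insert (k : Fin n) P)
      (Finset.insert_subset hkS hPS) ⟨r, Finset.mem_insert_of_mem hr⟩ hins
    omega

/-- Growing any nonempty set by `m` columns inside the connected graph `Γ_A`,
the count drops by at most `1` per step. -/
lemma grow_out (n d : ℕ) (A : Fin n → Fin n → Bool)
    (hcol : ∀ j : Fin n, (univ.filter (fun i => A i j)).card = d)
    (hconn : (gammaA n d A).Connected) :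
    ∀ m (T : Finset (Fin n)), T.Nonempty → T.card + m ≤ n →
      ∃ T' : Finset (Fin n), T ⊆ T' ∧ T'.card = T.card + m ∧
        (univ.filter (fun i => ∀ j ∈ T, A i j)).card ≤
          (univ.filter (fun i => ∀ j ∈ T', A i j)).card + m := by
  intro m
  induction m with
  | zero =>
    intro T _ _
    exact ⟨T, Finset.Subset.refl T, by omega, by omega⟩
  | succ m ih =>
    intro T hTne hTcard
    have hTlt : T.card < n := by omega
    have hne : T ≠ univ := by
      intro h
      rw [h, Finset.card_univ, Fintype.card_fin] at hTlt
      omega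
    obtain ⟨k', _, hk'T⟩ :=
      Finset.exists_of_ssubset (lt_of_le_of_ne (Finset.subset_univ T) hne)
    obtain ⟨r, hr⟩ := hTne
    obtain ⟨w⟩ := hconn.preconnected r k'
    obtain ⟨j, k, hjT, hkT, hadj⟩ := exit_walk (Q := fun v => v ∈ T) w hr hk'T
    have hstep := stepA n d A hcol T j k hjT hadj
    have hins : (insert k T).card = T.card + 1 :=
      Finset.card_insert_of_notMem hkT
    obtain ⟨T', hsub, hcard', hle⟩ := ih (insert k T)
      ⟨r, Finset.mem_insert_of_mem hr⟩ (by omega)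
    exact ⟨T', (Finset.subset_insert k T).trans hsub, by omega, by omega⟩

/-- If every row and every column of an `n × n` 0/1-matrix `A` has exactly `d` ones,
`n > d`, and `Γ_A` is connected, then for every set `S` of columns with `0 < |S| ≤ d`
inducing a connected subgraph of `Γ_A`, the number of rows having ones in all columns
of `S` equals `d - |S| + 1`. -/
theorem stmt3 (n d : ℕ) (hn : 0 < n) (hd : 0 < d) (hnd : d < n)
    (A : Fin n → Fin n → Bool)
    (hrow : ∀ i : Fin n, (univ.filter (fun j => A i j)).card = d)
    (hcol : ∀ j : Fin n, (univ.filter (fun i => A i j)).card = d)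
    (hconn : (gammaA n d A).Connected) :
    ∀ S : Finset (Fin n), 0 < S.card → S.card ≤ d →
      ((gammaA n d A).induce (S : Set (Fin n))).Connected →
      (univ.filter (fun i => ∀ j ∈ S, A i j)).card = d - S.card + 1 := by
  intro S hpos hle hScon
  obtain ⟨r, hr⟩ := Finset.card_pos.mp hpos
  -- lower bound
  have hsingle : (univ.filter (fun i => ∀ j ∈ ({r} : Finset (Fin n)), A i j)).card = d := by
    rw [← hcol r]
    congr 1
    ext i
    simp
  have hlow := grow_in n d A hcol S hScon (S.card - 1) {r}
    (Finset.singleton_subset_iff.mpr hr) ⟨r, Finset.mem_singleton_self r⟩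
    (by rw [Finset.card_singleton]; omega)
  rw [hsingle] at hlow
  -- upper bound
  obtain ⟨T', hsub, hcardT', hup⟩ := grow_out n d A hcol hconn (d + 1 - S.card) S
    ⟨r, hr⟩ (by omega)
  have hT'card : T'.card = d + 1 := by omega
  have hT'zero : (univ.filter (fun i => ∀ j ∈ T', A i j)).card = 0 := by
    by_contra h
    obtain ⟨i, hi⟩ := Finset.card_pos.mp (Nat.pos_of_ne_zero h)
    simp only [Finset.mem_filter, Finset.mem_univ, true_and] at hi
    have hsub2 : T' ⊆ univ.filter (fun j => A i j) := by
      intro j hj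
      simp only [Finset.mem_filter, Finset.mem_univ, true_and]
      exact hi j hj
    have := Finset.card_le_card hsub2
    rw [hT'card, hrow i] at this
    omega
  rw [hT'zero] at hup
  omega
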